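/- Every block of a uniquely C_t-saturated graph that has fewer than t vertices is a complete graph. -/

import Mathlib

open SimpleGraph

/-- `G` has a cycle on `t` vertices (a cycle of length `t`). -/
def HasCycleOn {V : Type*} (G : SimpleGraph V) (t : ℕ) : Prop :=
  ∃ (v : V) (w : G.Walk v v), w.IsCycle ∧ w.length = t

/-- `c` is the edge set of some cycle on `t` vertices in `G`. -/
def IsCtEdgeSet {V : Type*} (G : SimpleGraph V) (t : ℕ) (c : Set (Sym2 V)) : Prop :=
  ∃ (v : V) (w : G.Walk v v), w.IsCycle ∧ w.length = t ∧ {e | e ∈ w.edges} = c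

/-- `G` is uniquely `C_t`-saturated: it has no cycle on `t` vertices, and adding any
edge of the complement creates exactly one cycle on `t` vertices. -/
def UniquelyCSat {V : Type*} (G : SimpleGraph V) (t : ℕ) : Prop :=
  ¬ HasCycleOn G t ∧
    ∀ x y : V, x ≠ y → ¬ G.Adj x y →
      ∃! c : Set (Sym2 V), IsCtEdgeSet (G ⊔ fromEdgeSet {s(x, y)}) t c
/-- The set `s` induces a block of `G`: a maximal set of vertices inducing a
connected subgraph with no cut-vertex. -/
def IsBlock {V : Type*} (G : SimpleGraph V) (s : Set V) : Prop :=
  s.Nonempty ∧ (G.induce s).Connected ∧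
    (∀ v ∈ s, (G.induce (s \ {v})).Preconnected) ∧
    ∀ u : Set V, s ⊆ u →
      ((G.induce u).Connected ∧ ∀ v ∈ u, (G.induce (u \ {v})).Preconnected) → u = s

/-- Reachability in an induced subgraph from a walk whose support stays inside the set. -/
lemma reach_induce_aux {V : Type*} {G : SimpleGraph V} {u : Set V} {x y : V}
    (w : G.Walk x y) (hw : ∀ z ∈ w.support, z ∈ u) (hx : x ∈ u) (hy : y ∈ u) :
    (G.induce u).Reachable ⟨x, hx⟩ ⟨y, hy⟩ := by
  induction w with
  | nil => rfl
  | @cons a c d h p ih =>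
    have hc : c ∈ u := hw c (by simp)
    have hadj : (G.induce u).Adj ⟨a, hx⟩ ⟨c, hc⟩ := h
    exact hadj.reachable.trans (ih (fun z hz => hw z (by simp [hz])) hc hy)

/-- Reachability in an induced subgraph is monotone in the inducing set. -/
lemma reach_mono_aux {V : Type*} {G : SimpleGraph V} {s u : Set V} (hsu : s ⊆ u) {x y : V}
    (hx : x ∈ s) (hy : y ∈ s)
    (h : (G.induce s).Reachable ⟨x, hx⟩ ⟨y, hy⟩) :
    (G.induce u).Reachable ⟨x, hsu hx⟩ ⟨y, hsu hy⟩ := by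
  let f : G.induce s →g G.induce u :=
    { toFun := fun z => ⟨z.1, hsu z.2⟩, map_rel' := fun h => h }
  exact h.map f

/-- Any path between two vertices of a block stays inside the block. -/
lemma block_path_subset_aux {V : Type*} [DecidableEq V] {G : SimpleGraph V} {s : Set V}
    (hs : IsBlock G s) {a b : V} (ha : a ∈ s) (hb : b ∈ s) (hab : a ≠ b)
    (p : G.Walk a b) (hp : p.IsPath) : ∀ z ∈ p.support, z ∈ s := by
  obtain ⟨-, hconn, hcut, hmax⟩ := hs
  set u : Set V := s ∪ {z | z ∈ p.support} with hu
  have hsu : s ⊆ u := Set.subset_union_left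
  have hpu : ∀ z ∈ p.support, z ∈ u := fun z hz => Or.inr hz
  have hnd : p.support.Nodup := hp.support_nodup
  have reachA : ∀ x (hx : x ∈ u), (G.induce u).Reachable ⟨x, hx⟩ ⟨a, hsu ha⟩ := by
    intro x hx
    rcases hx with hxs | hxp
    · exact reach_mono_aux hsu hxs ha (hconn.preconnected ⟨x, hxs⟩ ⟨a, ha⟩)
    · exact (reach_induce_aux (p.takeUntil x hxp)
        (fun z hz => hpu z (p.support_takeUntil_subset hxp hz)) (hsu ha) (hpu x hxp)).symm
  have hconnU : (G.induce u).Connected := by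
    rw [connected_iff]
    refine ⟨fun x y => ?_, ⟨⟨a, hsu ha⟩⟩⟩
    exact (reachA x.1 x.2).trans (reachA y.1 y.2).symm
  have hcutU : ∀ v ∈ u, (G.induce (u \ {v})).Preconnected := by
    intro v hv
    have hdp : (G.induce (s \ {v})).Preconnected := by
      by_cases hvs : v ∈ s
      · exact hcut v hvs
      · rw [Set.diff_singleton_eq_self hvs]; exact hconn.preconnected
    obtain ⟨c, hcs, hcv⟩ : ∃ c, c ∈ s ∧ c ≠ v := by
      by_cases h : v = a
      · exact ⟨b, hb, fun hbv => hab (h ▸ hbv ▸ rfl)⟩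
      · exact ⟨a, ha, fun hav => h (hav ▸ rfl)⟩
    have hcW : c ∈ s \ {v} := ⟨hcs, hcv⟩
    have hsd : s \ {v} ⊆ u \ {v} := fun z hz => ⟨hsu hz.1, hz.2⟩
    have key : ∀ x (hx : x ∈ u \ {v}),
        (G.induce (u \ {v})).Reachable ⟨x, hx⟩ ⟨c, hsd hcW⟩ := by
      intro x hx
      have hxv : x ≠ v := hx.2
      have lift : ∀ {e : V} (he : e ∈ s) (q : G.Walk x e),
          (∀ z ∈ q.support, z ∈ p.support) → v ∉ q.support →
          (G.induce (u \ {v})).Reachable ⟨x, hx⟩ ⟨c, hsd hcW⟩ := by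
        intro e he q hqsub hqv
        have hqu : ∀ z ∈ q.support, z ∈ u \ {v} := fun z hz =>
          ⟨hpu z (hqsub z hz), fun h => hqv (h ▸ hz)⟩
        have hev : e ≠ v := fun h => hqv (h ▸ q.end_mem_support)
        have r1 := reach_induce_aux (u := u \ {v}) q hqu hx (hqu e q.end_mem_support)
        exact r1.trans (reach_mono_aux hsd ⟨he, hev⟩ hcW (hdp ⟨e, he, hev⟩ ⟨c, hcW⟩))
      rcases hx.1 with hxs | hxp
      · exact reach_mono_aux hsd ⟨hxs, hxv⟩ hcW (hdp ⟨x, hxs, hxv⟩ ⟨c, hcW⟩)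
      · set q1 := p.takeUntil x hxp with hq1
        set q2 := p.dropUntil x hxp with hq2
        by_cases hv1 : v ∈ q1.support
        · have hv2 : v ∉ q2.support := by
            intro hv2
            have htl : v ∈ q2.support.tail := by
              rw [q2.support_eq_cons] at hv2
              rcases List.mem_cons.mp hv2 with h | h
              · exact absurd h.symm hxv
              · exact h
            have hnd' := hnd
            rw [← p.take_spec hxp, Walk.support_append] at hnd'
            exact (List.disjoint_of_nodup_append hnd') hv1 htl
          exact lift hb q2 (fun z hz => p.support_dropUntil_subset hxp hz) hv2
        · exact (lift ha q1.reverse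
            (fun z hz => p.support_takeUntil_subset hxp (by simpa using hz))
            (by simpa using hv1))
    intro x y
    exact (key x.1 x.2).trans (key y.1 y.2).symm
  have := hmax u hsu ⟨hconnU, hcutU⟩
  intro z hz
  rw [← this]
  exact hpu z hz

/-- From a cycle and a dart of it starting at the cycle's base vertex, extract the
path obtained by deleting that dart's edge. -/
lemma cycle_dart_path_aux {V : Type*} {G' : SimpleGraph V} {x : V} {w : G'.Walk x x}
    (hw : w.IsCycle) {d : G'.Dart} (hd : d ∈ w.darts) (hx : d.fst = x) :
    ∃ q : G'.Walk d.snd x, q.IsPath ∧ d.edge ∉ q.edges ∧ q.length + 1 = w.length := by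
  cases w with
  | nil => simp at hd
  | @cons _ y _ h q =>
    rw [Walk.darts_cons, List.mem_cons] at hd
    obtain ⟨hq, he⟩ := (Walk.cons_isCycle_iff q h).mp hw
    have key : d = ⟨(x, y), h⟩ := by
      rcases hd with rfl | hdq
      · rfl
      · exfalso
        have hmem : x ∈ q.support.dropLast := by
          rw [← Walk.map_fst_darts]
          exact List.mem_map.mpr ⟨d, hdq, hx⟩
        have hnd : q.support.Nodup := hq.support_nodup
        have h1 : q.support ≠ [] := q.support_ne_nil
        have hsp : q.support.dropLast ++ [x] = q.support := by
          conv_rhs => rw [← List.dropLast_append_getLast h1]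
          rw [q.getLast_support]
        rw [← hsp] at hnd
        exact (List.disjoint_of_nodup_append hnd) hmem (by simp)
    subst key
    exact ⟨q, hq, he, by simp⟩

/-- Every block with fewer than `t` vertices in a uniquely `C_t`-saturated graph is a
complete graph. -/
theorem stmt_1 {V : Type*} [Fintype V] (G : SimpleGraph V) (t : ℕ)
    (hG : UniquelyCSat G t) (s : Set V) (hs : IsBlock G s) (hcard : s.ncard < t) :
    ∀ a ∈ s, ∀ b ∈ s, a ≠ b → G.Adj a b := by
  classical
  intro a ha b hb hne
  by_contra hadj
  obtain ⟨c, ⟨v0, w, hcyc, hlen, -⟩, -⟩ := hG.2 a b hne hadj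
  by_cases he : s(a, b) ∈ w.edges
  · obtain ⟨d, hd, hde⟩ := List.mem_map.mp (by rwa [Walk.edges] at he)
    have hxsup : d.fst ∈ w.support := Walk.dart_fst_mem_support_of_mem_darts w hd
    set w₂ := w.rotate _ hxsup with hw₂
    have hc₂ : w₂.IsCycle := hcyc.rotate hxsup
    have hd₂ : d ∈ w₂.darts := (w.rotate_darts _ hxsup).mem_iff.mpr hd
    have hlen₂ : w₂.length = t := by
      have := (w.rotate_darts _ hxsup).perm.length_eq
      rw [Walk.length_darts, Walk.length_darts] at this
      rw [this, hlen]
    obtain ⟨q, hqpath, hqe, hqlen⟩ := cycle_dart_path_aux hc₂ hd₂ rfl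
    have hsub : ∀ e ∈ q.edges, e ∈ G.edgeSet := by
      intro e hew
      have h1 := q.edges_subset_edgeSet hew
      rw [edgeSet_sup, edgeSet_fromEdgeSet] at h1
      rcases h1 with h1 | h1
      · exact h1
      · exfalso
        have h2 : e = s(a, b) := h1.1
        rw [h2] at hew
        exact hqe (by rw [hde]; exact hew)
    set p := q.transfer G hsub with hpdef
    have hppath : p.IsPath := hqpath.transfer hsub
    have hplen : p.length + 1 = t := by rw [Walk.length_transfer]; rw [hqlen, hlen₂]
    have hends : (d.snd ∈ s ∧ d.fst ∈ s) ∧ d.snd ≠ d.fst := by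
      have h0 : s(d.fst, d.snd) = s(a, b) := hde
      rw [Sym2.eq_iff] at h0
      rcases h0 with ⟨h1, h2⟩ | ⟨h1, h2⟩
      · exact ⟨⟨by rw [h2]; exact hb, by rw [h1]; exact ha⟩, by rw [h1, h2]; exact hne.symm⟩
      · exact ⟨⟨by rw [h2]; exact ha, by rw [h1]; exact hb⟩, by rw [h1, h2]; exact hne⟩
    have hsupp : ∀ z ∈ p.support, z ∈ s :=
      block_path_subset_aux hs hends.1.1 hends.1.2 hends.2 p hppath
    have hfin : s.Finite := Set.toFinite s
    have hsub2 : {z | z ∈ p.support} ⊆ s := fun z hz => hsupp z hz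
    have hcoe : {z | z ∈ p.support} = (↑p.support.toFinset : Set V) := by
      ext z; simp
    have hcard2 : ({z | z ∈ p.support} : Set V).ncard = t := by
      rw [hcoe, Set.ncard_coe_finset, List.toFinset_card_of_nodup hppath.support_nodup,
        Walk.length_support, hplen]
    have := Set.ncard_le_ncard hsub2 hfin
    omega
  · refine hG.1 ⟨v0, w.transfer G ?_, hcyc.transfer _, by rw [Walk.length_transfer]; exact hlen⟩
    intro e hew
    have h1 := w.edges_subset_edgeSet hew
    rw [edgeSet_sup, edgeSet_fromEdgeSet] at h1
    rcases h1 with h1 | h1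
    · exact h1
    · exact absurd (h1.1 ▸ hew : s(a,b) ∈ w.edges) he
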